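/- Suppose n is an odd positive integer with n > 1, q ≥ 2 is an integer, and (q^n + 1)/(q + 1) is a power of a prime p (i.e., equals p^l for some prime p and integer l ≥ 1). Then n is prime. -/

import Mathlib

open Finset

private lemma aux_one_add_pow {R : Type*} [CommRing R] (e : R) (he : e * e = 0) :
    ∀ i : ℕ, (1 + e) ^ i = 1 + (i : R) * e := by
  intro i
  induction i with
  | zero => simp
  | succ k ih =>
    rw [pow_succ, ih]
    push_cast
    linear_combination (k : R) * he

-- geometric quotient as a natural number
private lemma aux_quot (x : ℕ) (r : ℕ) (hr : Odd r) :
    ∃ C : ℕ, (x + 1) * C = x ^ r + 1 ∧ (C : ℤ) = ∑ i ∈ range r, (-(x : ℤ)) ^ i := by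
  have key : (∑ i ∈ range r, (-(x : ℤ)) ^ i) * ((x : ℤ) + 1) = (x : ℤ) ^ r + 1 := by
    have h1 := geom_sum_mul (-(x : ℤ)) r
    have h2 : (-(x : ℤ)) ^ r = -((x:ℤ) ^ r) := hr.neg_pow (x:ℤ)
    rw [h2] at h1
    linarith [h1]
  set G : ℤ := ∑ i ∈ range r, (-(x : ℤ)) ^ i with hG
  have hxpos : (0:ℤ) < (x:ℤ) + 1 := by positivity
  have hGnn : 0 ≤ G := by
    by_contra hneg
    push_neg at hneg
    nlinarith [key, pow_nonneg (by positivity : (0:ℤ) ≤ (x:ℤ)) r]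
  refine ⟨G.toNat, ?_, Int.toNat_of_nonneg hGnn⟩
  have : ((x + 1) * G.toNat : ℤ) = ((x ^ r + 1 : ℕ) : ℤ) := by
    push_cast
    rw [Int.toNat_of_nonneg hGnn]
    linarith [key]
  exact_mod_cast this

set_option maxHeartbeats 800000 in
theorem stmt_1 (n q : ℕ) (hn : 1 < n) (hodd : Odd n) (hq : 2 ≤ q)
    (h : ∃ p l : ℕ, p.Prime ∧ 1 ≤ l ∧ q ^ n + 1 = (q + 1) * p ^ l) :
    n.Prime := by
  by_contra hnp
  obtain ⟨p, l, hp, hl, heq⟩ := h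
  set r := n.minFac with hrdef
  have hrp : r.Prime := Nat.minFac_prime (by omega)
  obtain ⟨a, hna⟩ : r ∣ n := Nat.minFac_dvd n
  have ha0 : a ≠ 0 := by rintro rfl; omega
  have ha1 : 1 < a := by
    rcases Nat.eq_or_lt_of_le (Nat.one_le_iff_ne_zero.mpr ha0) with h1 | h1
    · exfalso; apply hnp; rw [hna, ← h1, mul_one]; exact hrp
    · exact h1
  have hadvd : a ∣ n := ⟨r, by rw [hna, mul_comm]⟩
  have haodd : Odd a := by
    rcases Nat.even_or_odd a with he | ho
    · exact absurd (hna ▸ he.mul_left r) (Nat.not_even_iff_odd.mpr hodd)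
    · exact ho
  have hrodd : Odd r := by
    rcases Nat.even_or_odd r with he | ho
    · exact absurd (hna ▸ he.mul_right a) (Nat.not_even_iff_odd.mpr hodd)
    · exact ho
  have hr3 : 3 ≤ r := by
    have h2 := hrp.two_le
    rcases hrodd with ⟨k, hk⟩
    omega
  have ha3 : 3 ≤ a := by
    rcases haodd with ⟨k, hk⟩
    omega
  set x := q ^ a with hxdef
  have hx8 : 8 ≤ x := by
    calc (8:ℕ) = 2 ^ 3 := by norm_num
    _ ≤ q ^ 3 := Nat.pow_le_pow_left hq 3
    _ ≤ q ^ a := Nat.pow_le_pow_right (by omega) ha3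
  have hqn : q ^ n = x ^ r := by
    rw [hxdef, ← pow_mul, hna, mul_comm]
  obtain ⟨C, hC, hCint⟩ := aux_quot x r hrodd
  obtain ⟨M, hM, hMint⟩ := aux_quot q a haodd
  -- M * C = p ^ l
  have hMC : M * C = p ^ l := by
    have key : (q + 1) * (M * C) = (q + 1) * p ^ l := by
      rw [← heq, ← mul_assoc, hM, hC, hqn]
    exact Nat.eq_of_mul_eq_mul_left (by omega) key
  have hqx : q < x := by
    calc q = q ^ 1 := (pow_one q).symm
    _ < q ^ a := Nat.pow_lt_pow_right (by omega) (by omega)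
  have hM2 : 2 ≤ M := by
    have hMx : (q + 1) * M = x + 1 := hM
    rcases Nat.lt_or_ge M 2 with hM1 | hM1
    · exfalso
      have : (q + 1) * M ≤ (q + 1) * 1 := Nat.mul_le_mul_left _ (by omega)
      rw [hMx] at this
      omega
    · exact hM1
  have hC2 : 2 ≤ C := by
    have hxr : x + 1 < x ^ r + 1 := by
      have : x ^ 1 < x ^ r := Nat.pow_lt_pow_right (by omega) (by omega)
      simpa using this
    rcases Nat.lt_or_ge C 2 with hC1 | hC1
    · exfalso
      have : (x + 1) * C ≤ (x + 1) * 1 := Nat.mul_le_mul_left _ (by omega)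
      rw [hC] at this
      omega
    · exact hC1
  -- p divides M, hence p divides x + 1
  have hpM : p ∣ M := by
    obtain ⟨t, ht, hMt⟩ := (Nat.dvd_prime_pow hp).mp ⟨C, hMC.symm⟩
    rcases Nat.eq_zero_or_pos t with rfl | htpos
    · simp at hMt; omega
    · rw [hMt]; exact dvd_pow_self p (by omega)
  have hpx1 : p ∣ x + 1 := hpM.trans ⟨q + 1, by rw [← hM, mul_comm]⟩
  -- C = p ^ s with s ≥ 1
  obtain ⟨s, hs, hCs⟩ := (Nat.dvd_prime_pow hp).mp ⟨M, by rw [mul_comm]; exact hMC.symm⟩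
  have hs1 : 1 ≤ s := by
    rcases Nat.eq_zero_or_pos s with rfl | h1
    · simp at hCs; omega
    · exact h1
  have hpC : p ∣ C := hCs ▸ dvd_pow_self p (by omega)
  -- In ZMod p : C ≡ r
  have hpr : p = r := by
    have hx1 : ((x : ZMod p) + 1) = 0 := by
      have := (ZMod.natCast_eq_zero_iff (x + 1) p).mpr hpx1
      push_cast at this
      exact this
    have hCzmod : (C : ZMod p) = (r : ZMod p) := by
      have := congrArg (Int.cast : ℤ → ZMod p) hCint
      push_cast at this
      rw [this]
      have hxneg : (x : ZMod p) = -1 := by linear_combination hx1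
      rw [hxneg]
      simp
    have : (r : ZMod p) = 0 := by
      rw [← hCzmod]
      exact (ZMod.natCast_eq_zero_iff C p).mpr hpC
    have hpr' : p ∣ r := (ZMod.natCast_eq_zero_iff r p).mp this
    exact (Nat.prime_dvd_prime_iff_eq hp hrp).mp hpr'
  -- s = 1 via computation in ZMod (p^2)
  have hseq : s = 1 := by
    by_contra hsne
    have hs2 : 2 ≤ s := by omega
    have hp2C : p ^ 2 ∣ C := by
      rw [hCs]
      exact pow_dvd_pow p hs2
    obtain ⟨m, hm⟩ := hpx1
    -- work in ZMod (p ^ 2)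
    set R := ZMod (p ^ 2) with hRdef
    have hpp : ((p : R)) * ((p : R)) = 0 := by
      have : (((p ^ 2 : ℕ)) : R) = 0 := ZMod.natCast_self (p ^ 2)
      push_cast at this
      linear_combination this
    set e : R := -((p : R) * (m : R)) with hedef
    have he : e * e = 0 := by
      rw [hedef]
      have : -((p:R) * (m:R)) * -((p:R) * (m:R)) = ((p:R) * (p:R)) * ((m:R) * (m:R)) := by ring
      rw [this, hpp, zero_mul]
    have hxR : (-(x : R)) = 1 + e := by
      have hmx : ((x : ℕ) : R) + 1 = (p : R) * (m : R) := by
        have := congrArg (Nat.cast : ℕ → ZMod (p ^ 2)) hm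
        push_cast at this
        linear_combination this
      rw [hedef]
      linear_combination -hmx
    have hCR : (C : R) = ∑ i ∈ range r, (-(x : R)) ^ i := by
      have := congrArg (Int.cast : ℤ → ZMod (p ^ 2)) hCint
      push_cast at this
      exact this
    -- evaluate the sum
    obtain ⟨k, hk⟩ := hrodd
    have hpk : p = 2 * k + 1 := by omega
    have hsum : (C : R) = (p : R) + ((p : R) * (k : R)) * e := by
      rw [hCR, hxR]
      have hterm : ∀ i ∈ range r, (1 + e) ^ i = 1 + (i : R) * e := fun i _ =>
        aux_one_add_pow e he i
      rw [Finset.sum_congr rfl hterm, Finset.sum_add_distrib]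
      simp only [Finset.sum_const, card_range, nsmul_eq_mul, mul_one]
      rw [← Finset.sum_mul, ← Nat.cast_sum, Finset.sum_range_id]
      have hgauss : r * (r - 1) / 2 = p * k := by
        have h1 : r - 1 = 2 * k := by omega
        have h2 : r * (2 * k) = 2 * (p * k) := by rw [hpr]; ring
        rw [h1, h2, Nat.mul_div_cancel_left _ (by norm_num : (0:ℕ) < 2)]
      rw [hgauss, ← hpr]
      push_cast
      ring
    have hpe : (p : R) * e = 0 := by
      rw [hedef]
      have : (p:R) * -((p:R) * (m:R)) = -(((p:R) * (p:R)) * (m:R)) := by ring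
      rw [this, hpp, zero_mul, neg_zero]
    have hCp : (C : R) = (p : R) := by
      rw [hsum]
      have : ((p : R) * (k : R)) * e = (k : R) * ((p : R) * e) := by ring
      rw [this, hpe, mul_zero, add_zero]
    have hCzero : (C : R) = 0 := (ZMod.natCast_eq_zero_iff C (p ^ 2)).mpr hp2C
    have : (p : ZMod (p ^ 2)) = 0 := by rw [← hCp, hCzero]
    have hdvd : p ^ 2 ∣ p := (ZMod.natCast_eq_zero_iff p (p ^ 2)).mp this
    have := Nat.le_of_dvd (by have := hp.two_le; omega) hdvd
    have := hp.two_le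
    nlinarith
  -- now C = p = r, derive size contradiction
  have hCr : C = r := by rw [hCs, hseq, pow_one, hpr]
  have hrle : r ≤ x + 1 := by
    rw [← hpr]
    exact Nat.le_of_dvd (by omega) hpx1
  have hx3 : x ^ 3 ≤ x ^ r := Nat.pow_le_pow_right (by omega) hr3
  have hkey : x ^ 3 + 1 ≤ (x + 1) * (x + 1) := by
    calc x ^ 3 + 1 ≤ x ^ r + 1 := by omega
    _ = (x + 1) * C := hC.symm
    _ = (x + 1) * r := by rw [hCr]
    _ ≤ (x + 1) * (x + 1) := Nat.mul_le_mul_left _ hrle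
  nlinarith [hx8, hkey]
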